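/- Let U1, U2, U3, U4 be pairwise transverse n-dimensional subspaces of a real vector space V of dimension 2n, let T = Refl(U1,U2) ∘ Refl(U3,U4), and let C = [U1,U2;U3,U4] ∈ End(U1). Suppose that for some integer N ≥ 2 one has T^N = id_V or T^N = −id_V (i.e., T has finite order N in PGL(2n,ℝ)). Then every complex root μ of the characteristic polynomial of C is of the form μ = sin²(kπ/(2N)) for some integer k; in particular every eigenvalue of C is real and lies in the interval [0,1]. -/

import Mathlib

open Module Submodule

variable {V : Type*} [AddCommGroup V] [Module ℝ V]

/-- The projection onto `U` with kernel `W`, as an endomorphism of `V`. -/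
noncomputable def projTo (U W : Submodule ℝ V) (h : IsCompl U W) : V →ₗ[ℝ] V :=
  U.subtype ∘ₗ U.linearProjOfIsCompl W h

/-- The reflection in the pair `(U, W)`: `π_U^W - π_W^U`. -/
noncomputable def reflPair (U W : Submodule ℝ V) (h : IsCompl U W) : V →ₗ[ℝ] V :=
  projTo U W h - projTo W U h.symm

/-- The generalized cross-ratio `[U1,U2;U3,U4]`: the restriction of
`π_{U1}^{U2} ∘ π_{U3}^{U4}` to `U1`, as an endomorphism of `U1`. -/
noncomputable def crossRatio (U1 U2 U3 U4 : Submodule ℝ V)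
    (h12 : IsCompl U1 U2) (h34 : IsCompl U3 U4) : U1 →ₗ[ℝ] U1 :=
  (U1.linearProjOfIsCompl U2 h12) ∘ₗ (projTo U3 U4 h34) ∘ₗ U1.subtype

lemma auxLinProjLeft (U W : Submodule ℝ V) (h : IsCompl U W) (x : U) :
    U.linearProjOfIsCompl W h x = x := projectionOnto_apply_left h x

lemma auxLinProjRight (U W : Submodule ℝ V) (h : IsCompl U W) (x : W) :
    U.linearProjOfIsCompl W h x = 0 := projectionOnto_apply_right h x

open Polynomial Complex in
/-- Auxiliary: the square of a reflection is the identity. -/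
lemma auxReflPairSq (U W : Submodule ℝ V) (h : IsCompl U W) :
    reflPair U W h ∘ₗ reflPair U W h = LinearMap.id := by
  ext x
  simp only [reflPair, projTo, LinearMap.comp_apply, LinearMap.sub_apply, LinearMap.id_apply,
    coe_subtype, Submodule.subtype_apply, map_sub, auxLinProjLeft,
    auxLinProjRight, ZeroMemClass.coe_zero, sub_zero, zero_sub, sub_neg_eq_add]
  exact Submodule.projection_add_projection_eq_self h x

/-- Auxiliary: the key identity relating `T + T⁻¹` and the cross-ratio on `U1`. -/
lemma auxKey (U1 U2 U3 U4 : Submodule ℝ V) (h12 : IsCompl U1 U2) (h34 : IsCompl U3 U4) :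
    ((reflPair U1 U2 h12 ∘ₗ reflPair U3 U4 h34) + reflPair U3 U4 h34 ∘ₗ reflPair U1 U2 h12)
      ∘ₗ U1.subtype
    = U1.subtype ∘ₗ ((4:ℝ) • crossRatio U1 U2 U3 U4 h12 h34 - (2:ℝ) • LinearMap.id) := by
  ext u
  have hxy : (↑(U3.linearProjOfIsCompl U4 h34 (↑u : V)) : V)
      + ↑(U4.linearProjOfIsCompl U3 h34.symm (↑u : V)) = ↑u :=
    Submodule.projection_add_projection_eq_self h34 (↑u : V)
  simp only [reflPair, projTo, crossRatio, LinearMap.comp_apply, LinearMap.add_apply,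
    LinearMap.sub_apply, LinearMap.smul_apply, LinearMap.id_apply, coe_subtype, map_sub,
    Submodule.subtype_apply, auxLinProjLeft, auxLinProjRight,
    ZeroMemClass.coe_zero, map_zero, sub_zero, zero_sub, SetLike.val_smul]
  set p1 := U1.linearProjOfIsCompl U2 h12 with hp1def
  set p2 := U2.linearProjOfIsCompl U1 h12.symm with hp2def
  set x : V := ↑((U3.linearProjOfIsCompl U4 h34) (↑u : V)) with hxdef
  set y : V := ↑((U4.linearProjOfIsCompl U3 h34.symm) (↑u : V)) with hydef
  have h2x : (↑(p1 x) : V) + ↑(p2 x) = x :=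
    Submodule.projection_add_projection_eq_self h12 x
  have h2y : (↑(p1 y) : V) + ↑(p2 y) = y :=
    Submodule.projection_add_projection_eq_self h12 y
  have hpu : (↑(p1 (↑u : V)) : V) = ↑u := by simp [hp1def, auxLinProjLeft]
  have hp1sum : (↑(p1 x) : V) + ↑(p1 y) = ↑u := by
    rw [← Submodule.coe_add, ← map_add, hxy, hpu]
  have e2x : (↑(p2 x) : V) = x - ↑(p1 x) := eq_sub_of_add_eq' h2x
  have e2y : (↑(p2 y) : V) = y - ↑(p1 y) := eq_sub_of_add_eq' h2y
  have e1y : (↑(p1 y) : V) = ↑u - ↑(p1 x) := eq_sub_of_add_eq' hp1sum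
  rw [e2x, e2y, e1y, ← hxy]
  module

open Polynomial in
/-- Auxiliary: over a field, a root of the characteristic polynomial is an eigenvalue. -/
lemma auxHasEigenvalueOfIsRootCharpoly {K W : Type*} [Field K] [AddCommGroup W] [Module K W]
    [FiniteDimensional K W] (f : Module.End K W) (μ : K)
    (h : f.charpoly.IsRoot μ) : Module.End.HasEigenvalue f μ := by
  classical
  have hdet : LinearMap.det (μ • (1 : Module.End K W) - f) = 0 := by
    let b := finBasis K W
    rw [← LinearMap.det_toMatrix b]
    have hmat : LinearMap.toMatrix b b (μ • (1 : Module.End K W) - f)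
        = ((LinearMap.toMatrix b b f).charmatrix).map (Polynomial.eval μ) := by
      ext i j
      by_cases hij : i = j
      · simp [Matrix.charmatrix_apply, Matrix.one_apply, Matrix.diagonal_apply, hij,
          LinearMap.toMatrix_apply, LinearMap.sub_apply, Finsupp.single_apply]
      · simp [Matrix.charmatrix_apply, Matrix.one_apply, Matrix.diagonal_apply, hij, Ne.symm hij,
          LinearMap.toMatrix_apply, LinearMap.sub_apply, Finsupp.single_apply]
    rw [hmat]
    have h0 : ((LinearMap.toMatrix b b f).charpoly).eval μ = 0 := by
      rw [LinearMap.charpoly_toMatrix]; exact h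
    rw [Matrix.charpoly] at h0
    have hmap := RingHom.map_det (Polynomial.evalRingHom μ) ((LinearMap.toMatrix b b f).charmatrix)
    rw [show ((LinearMap.toMatrix b b f).charmatrix).map (Polynomial.eval μ)
        = (Polynomial.evalRingHom μ).mapMatrix ((LinearMap.toMatrix b b f).charmatrix) from rfl,
      ← hmap]
    exact h0
  have hk := LinearMap.bot_lt_ker_of_det_eq_zero hdet
  obtain ⟨x, hx, hx0⟩ := Submodule.ne_bot_iff _ |>.1 hk.ne'
  refine Module.End.hasEigenvalue_of_hasEigenvector (x := x) ⟨?_, hx0⟩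
  rw [Module.End.mem_eigenspace_iff]
  have hker := LinearMap.mem_ker.1 hx
  have h2 : μ • x - f x = 0 := by simpa using hker
  exact (sub_eq_zero.mp h2).symm

open Polynomial in
/-- Auxiliary: non-coprime polynomials over `ℂ` have a common root. -/
lemma auxCommonRoot (p q : ℂ[X]) (hp : p ≠ 0) (hnc : ¬ IsCoprime p q) :
    ∃ z : ℂ, p.IsRoot z ∧ q.IsRoot z := by
  classical
  set g := EuclideanDomain.gcd p q with hg
  have hg0 : g ≠ 0 := fun h => hp ((EuclideanDomain.gcd_eq_zero_iff.mp h).1)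
  have hgu : ¬ IsUnit g := fun h => hnc (EuclideanDomain.gcd_isUnit_iff.mp h)
  have hdeg : 0 < g.degree :=
    lt_of_le_of_ne (zero_le_degree_iff.mpr hg0)
      (fun h => hgu (isUnit_iff_degree_eq_zero.mpr h.symm))
  obtain ⟨z, hz⟩ := Complex.exists_root hdeg
  exact ⟨z, hz.dvd (EuclideanDomain.gcd_dvd_left p q),
    hz.dvd (EuclideanDomain.gcd_dvd_right p q)⟩

open Polynomial Complex in
/-- Auxiliary: analysis of common roots of `X² - 2cX + 1` and `X^{2N} - 1`. -/
lemma auxRootAnalysis (N : ℕ) (hN : 2 ≤ N) (lam c μ : ℂ)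
    (hq : lam ^ (2 * N) = 1)
    (hp : lam ^ 2 - (2 * c) * lam + 1 = 0)
    (hc : c = 2 * μ - 1) :
    ∃ k : ℤ, μ = (Real.sin (k * Real.pi / (2 * N)) ^ 2 : ℝ) := by
  have h2N : (2 * N) ≠ 0 := by omega
  have hNR : (N : ℝ) ≠ 0 := Nat.cast_ne_zero.mpr (by omega)
  haveI : NeZero (2 * N) := ⟨h2N⟩
  have hprim := Complex.isPrimitiveRoot_exp (2 * N) h2N
  obtain ⟨i, hi, hpow⟩ := hprim.eq_pow_of_pow_eq_one hq
  set θ : ℝ := 2 * Real.pi * i / (2 * N) with hθ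
  have hlam : lam = Complex.exp (θ * I) := by
    rw [← hpow, ← Complex.exp_nat_mul]
    congr 1
    rw [hθ]
    push_cast
    field_simp
  set e := Complex.exp ((θ : ℂ) * I) with he
  set e' := Complex.exp (-((θ : ℂ) * I)) with he'
  have hee' : e * e' = 1 := by rw [he, he', ← Complex.exp_add]; simp
  have hsum : e + e' = 2 * Complex.cos (θ : ℂ) := by
    rw [he, he', neg_mul_eq_neg_mul, Complex.exp_mul_I, Complex.exp_mul_I, Complex.cos_neg,
      Complex.sin_neg]
    ring
  have hene : e ≠ 0 := Complex.exp_ne_zero _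
  rw [hlam] at hp
  have h1 : e ^ 2 + 1 = 2 * c * e := by linear_combination hp
  have h2 : e ^ 2 + 1 = 2 * Complex.cos (θ : ℂ) * e := by
    linear_combination e * hsum - hee'
  have hc2 : c = Complex.cos (θ : ℂ) := by
    have h3 : c * e = Complex.cos (θ : ℂ) * e := by linear_combination (h2 - h1) / 2
    exact mul_right_cancel₀ hene h3
  refine ⟨(N : ℤ) - i, ?_⟩
  have hk : (((N : ℤ) - i : ℤ) : ℝ) * Real.pi / (2 * N) = Real.pi / 2 - i * Real.pi / (2 * N) := by
    push_cast
    field_simp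
  have hsin : Real.sin ((((N : ℤ) - i : ℤ) : ℝ) * Real.pi / (2 * N)) ^ 2
      = (1 + Real.cos θ) / 2 := by
    rw [hk, Real.sin_pi_div_two_sub, Real.cos_sq]
    rw [show 2 * ((i : ℝ) * Real.pi / (2 * N)) = θ by rw [hθ]; ring]
    ring
  rw [hsin]
  push_cast [Complex.ofReal_cos]
  linear_combination (-1/2 : ℂ) * hc + (1/2 : ℂ) * hc2

open Polynomial TensorProduct

theorem stmt6 {V : Type*} [AddCommGroup V] [Module ℝ V] [FiniteDimensional ℝ V]
    (n : ℕ) (hV : finrank ℝ V = 2 * n)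
    (U1 U2 U3 U4 : Submodule ℝ V)
    (hd1 : finrank ℝ U1 = n) (hd2 : finrank ℝ U2 = n)
    (hd3 : finrank ℝ U3 = n) (hd4 : finrank ℝ U4 = n)
    (h12 : IsCompl U1 U2) (h13 : IsCompl U1 U3) (h14 : IsCompl U1 U4)
    (h23 : IsCompl U2 U3) (h24 : IsCompl U2 U4) (h34 : IsCompl U3 U4)
    (N : ℕ) (hN : 2 ≤ N)
    (hT : (reflPair U1 U2 h12 ∘ₗ reflPair U3 U4 h34) ^ N = (LinearMap.id : V →ₗ[ℝ] V) ∨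
          (reflPair U1 U2 h12 ∘ₗ reflPair U3 U4 h34) ^ N = -(LinearMap.id : V →ₗ[ℝ] V)) :
    (∀ μ : ℂ, ((crossRatio U1 U2 U3 U4 h12 h34).charpoly.map (algebraMap ℝ ℂ)).IsRoot μ →
        ∃ k : ℤ, μ = (Real.sin (k * Real.pi / (2 * N)) ^ 2 : ℝ)) ∧
    (∀ μ : ℝ, Module.End.HasEigenvalue (crossRatio U1 U2 U3 U4 h12 h34) μ →
        0 ≤ μ ∧ μ ≤ 1) := by
  classical
  have hR1sq := auxReflPairSq U1 U2 h12
  have hR2sq := auxReflPairSq U3 U4 h34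
  have hkey := auxKey U1 U2 U3 U4 h12 h34
  set R1 := reflPair U1 U2 h12 with hR1def
  set R2 := reflPair U3 U4 h34 with hR2def
  set C := crossRatio U1 U2 U3 U4 h12 h34 with hCdef
  have hTinv : (R1 ∘ₗ R2) ∘ₗ (R2 ∘ₗ R1) = LinearMap.id := by
    have hmid : R2 ∘ₗ (R2 ∘ₗ R1) = R1 := by
      rw [← LinearMap.comp_assoc, hR2sq, LinearMap.id_comp]
    rw [LinearMap.comp_assoc, hmid, hR1sq]
  have hone : (LinearMap.id : V →ₗ[ℝ] V) = 1 := rfl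
  have h2N : (R1 ∘ₗ R2) ^ (2 * N) = LinearMap.id := by
    have hps : (R1 ∘ₗ R2) ^ (2 * N) = ((R1 ∘ₗ R2) ^ N) ^ 2 := by
      rw [← pow_mul, mul_comm]
    rcases hT with h | h
    · rw [hps, h, hone, one_pow]
    · rw [hps, h, neg_sq, hone, one_pow]
  -- base change to ℂ
  set Tc := (R1 ∘ₗ R2).baseChange ℂ with hTcdef
  set Gc := (R2 ∘ₗ R1).baseChange ℂ with hGcdef
  set Cc := C.baseChange ℂ with hCcdef
  set inc := (U1.subtype).baseChange ℂ with hincdef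
  have hTGc : Tc ∘ₗ Gc = LinearMap.id := by
    rw [hTcdef, hGcdef, ← LinearMap.baseChange_comp, hTinv, LinearMap.baseChange_id]
  have hT2Nc : Tc ^ (2 * N) = LinearMap.id := by
    rw [hTcdef, ← LinearMap.baseChange_pow, h2N, LinearMap.baseChange_id]
  have hkeyc : (Tc + Gc) ∘ₗ inc
      = inc ∘ₗ ((4:ℝ) • Cc - (2:ℝ) • LinearMap.id) := by
    have hbc1 : (Tc + Gc) ∘ₗ inc
        = (((R1 ∘ₗ R2) + R2 ∘ₗ R1) ∘ₗ U1.subtype).baseChange ℂ := by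
      rw [LinearMap.baseChange_comp, LinearMap.baseChange_add]
    have hbc2 : (U1.subtype ∘ₗ ((4:ℝ) • C - (2:ℝ) • LinearMap.id)).baseChange ℂ
        = inc ∘ₗ ((4:ℝ) • Cc - (2:ℝ) • LinearMap.id) := by
      rw [LinearMap.baseChange_comp, LinearMap.baseChange_sub, LinearMap.baseChange_smul,
        LinearMap.baseChange_smul, LinearMap.baseChange_id]
    rw [hbc1, hkey, hbc2]
  have part1 : ∀ μ : ℂ, (C.charpoly.map (algebraMap ℝ ℂ)).IsRoot μ →
      ∃ k : ℤ, μ = (Real.sin (k * Real.pi / (2 * N)) ^ 2 : ℝ) := by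
    intro μ hμ
    have hch : (Cc.charpoly).IsRoot μ := by
      rw [hCcdef, LinearMap.charpoly_baseChange]
      exact hμ
    obtain ⟨x, hx⟩ := (auxHasEigenvalueOfIsRootCharpoly Cc μ hch).exists_hasEigenvector
    have hxv : Cc x = μ • x := hx.apply_eq_smul
    set v := inc x with hvdef
    have hv0 : v ≠ 0 := by
      intro h0
      have hinj : Function.Injective inc := by
        have h1 : Function.Injective (LinearMap.lTensor ℂ U1.subtype) :=
          Module.Flat.lTensor_preserves_injective_linearMap _ U1.injective_subtype
        exact h1
      exact hx.2 (by simpa using hinj (show inc x = inc 0 by simpa using h0))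
    have hSv : Tc v + Gc v = ((4:ℂ) * μ - 2) • v := by
      have happ := LinearMap.congr_fun hkeyc x
      simp only [LinearMap.comp_apply, LinearMap.add_apply, LinearMap.sub_apply,
        LinearMap.smul_apply, LinearMap.id_apply] at happ
      rw [hxv] at happ
      have hsm : (4:ℝ) • (μ • x) - (2:ℝ) • x = ((4:ℂ) * μ - 2) • x := by
        rw [← algebraMap_smul ℂ (4:ℝ) (μ • x), ← algebraMap_smul ℂ (2:ℝ) x, smul_smul,
          ← sub_smul]
        norm_num [Complex.coe_algebraMap]
      rw [hsm, map_smul] at happ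
      exact happ
    have hTTv : Tc (Tc v) + v = ((4:ℂ) * μ - 2) • Tc v := by
      have h4 := congrArg Tc hSv
      rw [map_add, map_smul] at h4
      have hGv : Tc (Gc v) = v := by
        rw [← LinearMap.comp_apply, hTGc, LinearMap.id_apply]
      rwa [hGv] at h4
    set c : ℂ := 2 * μ - 1 with hcdef
    set p : ℂ[X] := X ^ 2 - Polynomial.C (2 * c) * X + 1 with hpdef
    set q : ℂ[X] := X ^ (2 * N) - 1 with hqdef
    have hqT : Polynomial.aeval Tc q = 0 := by
      rw [hqdef]
      rw [map_sub, map_one, Polynomial.aeval_X_pow]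
      exact sub_eq_zero.mpr hT2Nc
    have hpTv : (Polynomial.aeval Tc p) v = 0 := by
      rw [hpdef]
      simp only [map_add, map_sub, map_mul, Polynomial.aeval_X_pow, Polynomial.aeval_C,
        Polynomial.aeval_X, map_one, LinearMap.add_apply, LinearMap.sub_apply,
        Module.End.one_apply, Module.End.mul_apply, pow_two]
      simp only [Module.algebraMap_end_apply, smul_smul]
      have h2c : (2 : ℂ) * c = (4:ℂ) * μ - 2 := by rw [hcdef]; ring
      rw [h2c, ← hTTv]
      abel
    have hnc : ¬ IsCoprime p q := by
      rintro ⟨a, b, hab⟩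
      have habv := congrArg (fun r => (Polynomial.aeval Tc r) v) hab
      simp only [map_add, map_mul, map_one, LinearMap.add_apply, Module.End.mul_apply,
        Module.End.one_apply, hqT, hpTv, map_zero, LinearMap.zero_apply] at habv
      exact hv0 (by simpa using habv.symm)
    have hp0 : p ≠ 0 := by
      intro h
      have : p.eval 0 = 1 := by simp [hpdef]
      rw [h] at this
      simp at this
    obtain ⟨lam, hlp, hlq⟩ := auxCommonRoot p q hp0 hnc
    have e1 : lam ^ (2 * N) = 1 := by
      have := hlq
      rw [hqdef] at this
      simp only [Polynomial.IsRoot, Polynomial.eval_sub, Polynomial.eval_pow,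
        Polynomial.eval_X, Polynomial.eval_one] at this
      linear_combination this
    have e2 : lam ^ 2 - (2 * c) * lam + 1 = 0 := by
      have := hlp
      rw [hpdef] at this
      simpa [Polynomial.IsRoot] using this
    exact auxRootAnalysis N hN lam c μ e1 e2 hcdef
  refine ⟨part1, ?_⟩
  intro μ hμ
  have h1 : (minpoly ℝ C).IsRoot μ := Module.End.hasEigenvalue_iff_isRoot.mp hμ
  have h2 : C.charpoly.IsRoot μ := h1.dvd (LinearMap.minpoly_dvd_charpoly C)
  have h3 : (C.charpoly.map (algebraMap ℝ ℂ)).IsRoot ((μ : ℂ)) := h2.map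
  obtain ⟨k, hk⟩ := part1 μ h3
  have hμeq : μ = Real.sin (k * Real.pi / (2 * N)) ^ 2 := by
    exact_mod_cast hk
  constructor
  · rw [hμeq]; positivity
  · rw [hμeq]; exact Real.sin_sq_le_one _
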